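/- Let B be a finite set, s, t ∈ [0,1], and u, v ∈ Δ(B). Then ‖s·u − t·v‖₁ ≥ (1/2)·max(s,t)·‖u − v‖₁. -/
import Mathlib

lemma l1_biscalar_aux {B : Type*} [Fintype B] (s t : ℝ) (ht0 : 0 ≤ t) (hts : t ≤ s)
    (u v : B → ℝ) (hv0 : ∀ a, 0 ≤ v a) (hu1 : ∑ a, u a = 1) (hv1 : ∑ a, v a = 1) :
    (1 / 2) * s * ∑ a, |u a - v a| ≤ ∑ a, |s * u a - t * v a| := by
  have hs0 : 0 ≤ s := ht0.trans hts
  have h1 : s * ∑ a, |u a - v a| = ∑ a, |s * u a - s * v a| := by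
    rw [Finset.mul_sum]
    refine Finset.sum_congr rfl fun a _ => ?_
    rw [← mul_sub, abs_mul, abs_of_nonneg hs0]
  have h2 : ∀ a, |s * u a - s * v a| ≤ |s * u a - t * v a| + (s - t) * v a := by
    intro a
    have h := abs_sub_le (s * u a) (t * v a) (s * v a)
    have h3 : |t * v a - s * v a| = (s - t) * v a := by
      rw [abs_of_nonpos (by nlinarith [hv0 a])]; ring
    linarith
  have h6 : ∑ a, |s * u a - s * v a| ≤ ∑ a, (|s * u a - t * v a| + (s - t) * v a) :=
    Finset.sum_le_sum fun a _ => h2 a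
  have h4 : ∑ a, (|s * u a - t * v a| + (s - t) * v a)
      = (∑ a, |s * u a - t * v a|) + (s - t) := by
    rw [Finset.sum_add_distrib, ← Finset.mul_sum, hv1, mul_one]
  have h5 : s - t ≤ ∑ a, |s * u a - t * v a| := by
    calc s - t = ∑ a, (s * u a - t * v a) := by
          rw [Finset.sum_sub_distrib, ← Finset.mul_sum, ← Finset.mul_sum, hu1, hv1]; ring
      _ ≤ ∑ a, |s * u a - t * v a| := Finset.sum_le_sum fun a _ => le_abs_self _
  linarith

theorem l1_biscalar_lower_bound (B : Type*) [Fintype B] (s t : ℝ)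
    (hs : s ∈ Set.Icc (0:ℝ) 1) (ht : t ∈ Set.Icc (0:ℝ) 1)
    (u v : B → ℝ) (hu : (∀ a, 0 ≤ u a) ∧ ∑ a, u a = 1)
    (hv : (∀ a, 0 ≤ v a) ∧ ∑ a, v a = 1) :
    (1 / 2) * max s t * ∑ a, |u a - v a| ≤ ∑ a, |s * u a - t * v a| := by
  rcases le_total t s with h | h
  · rw [max_eq_left h]
    exact l1_biscalar_aux s t ht.1 h u v hv.1 hu.2 hv.2
  · rw [max_eq_right h]
    have := l1_biscalar_aux t s hs.1 h v u hu.1 hv.2 hu.2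
    have e1 : ∑ a, |v a - u a| = ∑ a, |u a - v a| :=
      Finset.sum_congr rfl fun a _ => abs_sub_comm _ _
    have e2 : ∑ a, |t * v a - s * u a| = ∑ a, |s * u a - t * v a| :=
      Finset.sum_congr rfl fun a _ => abs_sub_comm _ _
    rw [e1, e2] at this
    exact this
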